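/- arXiv:2507.20646 — 2 statements merged into one kernel-verified Lean document; each statement's English description precedes it below -/
import Mathlib

section
/- For the para-Krawtchouk recurrence coefficient C_{n+1} = -(n+1)(n - N)(2n + 1 - N - γ)(2n + 1 - N + γ)/(4(2n - N)(2n - N + 2)), if N is an odd positive integer, 0 < γ < 2, and 0 ≤ n < N - 1, then C_{n+1} > 0. -/
/-- the para-Krawtchouk coefficient C_{n+1} is positive for 0 ≤ n < N-1. -/
theorem stmt6 (N : ℕ) (hN : Odd N) (hN0 : 0 < N) (γ : ℝ) (hγ0 : 0 < γ) (hγ2 : γ < 2)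
    (n : ℕ) (hn : n + 1 < N) :
    0 < -(((n : ℝ) + 1) * ((n : ℝ) - N) * (2 * (n : ℝ) + 1 - N - γ) * (2 * (n : ℝ) + 1 - N + γ))
      / (4 * (2 * (n : ℝ) - N) * (2 * (n : ℝ) - N + 2)) := by
  obtain ⟨k, hk⟩ := hN
  have hNr : (N : ℝ) = 2 * k + 1 := by rw [hk]; push_cast; ring
  have hnN : (n : ℝ) < N := by
    have : n < N := Nat.lt_of_succ_lt hn
    exact_mod_cast this
  have hnum0 : ((n : ℝ) + 1) * ((N : ℝ) - n) > 0 := by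
    have h1 : (0:ℝ) < (n : ℝ) + 1 := by positivity
    nlinarith
  rcases eq_or_ne n k with h | h
  · -- a = 0 case
    subst h
    have ha : 2 * (n : ℝ) + 1 - N = 0 := by rw [hNr]; ring
    have hden : 4 * (2 * (n : ℝ) - N) * (2 * (n : ℝ) - N + 2) = -4 := by
      rw [hNr]; ring
    have hnum : -(((n : ℝ) + 1) * ((n : ℝ) - N) * (2 * (n : ℝ) + 1 - N - γ) * (2 * (n : ℝ) + 1 - N + γ)) < 0 := by
      rw [ha]; nlinarith [mul_pos hnum0 (mul_pos hγ0 hγ0)]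
    rw [hden]
    exact div_pos_of_neg_of_neg hnum (by norm_num)
  · -- |a| ≥ 2 case
    have hz : ((n : ℤ) - k) ≠ 0 := by
      intro h0
      apply h
      have : (n : ℤ) = k := by linarith
      exact_mod_cast this
    have h1 : (1 : ℤ) ≤ ((n : ℤ) - k) ^ 2 := by
      rcases hz.lt_or_gt with hlt | hlt <;> nlinarith
    have h1r : (1 : ℝ) ≤ ((n : ℝ) - k) ^ 2 := by exact_mod_cast h1
    have ha : 2 * (n : ℝ) + 1 - N = 2 * ((n : ℝ) - k) := by rw [hNr]; ring
    have hsq : (2 * (n : ℝ) + 1 - N) ^ 2 ≥ 4 := by rw [ha]; nlinarith [mul_pos hnum0 (mul_pos hγ0 hγ0)]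
    have hnum : 0 < -(((n : ℝ) + 1) * ((n : ℝ) - N) * (2 * (n : ℝ) + 1 - N - γ) * (2 * (n : ℝ) + 1 - N + γ)) := by
      have hX : 0 < (2 * (n : ℝ) + 1 - N - γ) * (2 * (n : ℝ) + 1 - N + γ) := by
        nlinarith
      nlinarith [mul_pos hnum0 hX]
    have hden : 0 < 4 * (2 * (n : ℝ) - N) * (2 * (n : ℝ) - N + 2) := by
      have : 4 * (2 * (n : ℝ) - N) * (2 * (n : ℝ) - N + 2)
          = 4 * ((2 * (n : ℝ) + 1 - N) ^ 2 - 1) := by ring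
      rw [this]; nlinarith
    exact div_pos hnum hden
end

section
/- With d = 1, a = 1/(1 - N), b = (N + γ - 1)/(N - 1), e = c = (1 - N - γ)/2, c₄ = 0, c₅ = 2, c₆ = 1, the formula C_{n+1} = -((n+1) d_{n-1}/(d_{2n-1} d_{2n+1})) φ^{[n]}(-e_n/d_{2n}) from the classical quadratic-lattice theorem equals the para-Krawtchouk coefficient -((n+1)(n - N)(2n + 1 - N - γ)(2n + 1 - N + γ))/(4(2n - N)(2n - N + 2)) for all 0 ≤ n < N - 1. -/
set_option maxHeartbeats 2000000

lemma aux12 (s γ m z : ℂ) (h1 : (1:ℂ) - s ≠ 0) (hA : 2*m - s ≠ 0)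
    (hB : 1 - s + 2*m ≠ 0) (hC : 2*m - s + 2 ≠ 0)
    (hz : z = -(((s+γ-1)/(s-1))*m + (1-s-γ)/2)/((1/(1-s))*(2*m)+1)) :
    -((m+1) * ((1/(1-s))*(m-1)+1) / (((1/(1-s))*(2*m-1)+1) * ((1/(1-s))*(2*m+1)+1)))
      * ((1/(1-s))*z^2 + ((s+γ-1)/(s-1))*z + (1-s-γ)/2 + m*((1/(1-s))*m+1))
    = -((m+1)*(m-s)*(2*m+1-s-γ)*(2*m+1-s+γ))/(4*(2*m-s)*(2*m-s+2)) := by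
  have h1' : s - 1 ≠ 0 := by intro h; exact h1 (by linear_combination -h)
  have key : ∀ x : ℂ, 1/(1-s)*x + 1 = (1-s+x)/(1-s) := by
    intro x; field_simp; ring
  have hD : (2:ℂ)*(1-s+2*m) ≠ 0 := mul_ne_zero two_ne_zero hB
  have hz' : z = (2*m*(s+γ-1)+(s-1)*(1-s-γ))/(2*(1-s+2*m)) := by
    rw [hz, key, div_div_eq_mul_div, div_eq_div_iff hB hD]
    field_simp
    ring
  have hQ : (1/(1-s))*z^2 + ((s+γ-1)/(s-1))*z + (1-s-γ)/2 + m*((1/(1-s))*m+1)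
      = ((2*m+1-s-γ)*(2*m+1-s+γ))/(4*(1-s)) := by
    have hDbig : (1 - s) * (2 * (1 - s + 2 * m)) ^ 2 * ((s - 1) * (2 * (1 - s + 2 * m))) * 2 ≠ 0 :=
      mul_ne_zero (mul_ne_zero (mul_ne_zero h1 (pow_ne_zero 2 hD)) (mul_ne_zero h1' hD)) two_ne_zero
    rw [hz']
    field_simp
    ring
  have hA' : (1:ℂ) - s + (2*m-1) ≠ 0 := by intro h; apply hA; linear_combination h
  have hC' : (1:ℂ) - s + (2*m+1) ≠ 0 := by intro h; apply hC; linear_combination h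
  have hR : ((m+1) * ((1/(1-s))*(m-1)+1) / (((1/(1-s))*(2*m-1)+1) * ((1/(1-s))*(2*m+1)+1)))
      = ((m+1)*(m-s)*(1-s))/((2*m-s)*(2*m-s+2)) := by
    rw [key, key, key, div_mul_div_comm,
      div_div_eq_mul_div, div_eq_div_iff (mul_ne_zero hA' hC') (mul_ne_zero hA hC)]
    field_simp
    ring
  rw [hQ, neg_mul, hR, div_mul_div_comm, ← neg_div,
    div_eq_div_iff (mul_ne_zero (mul_ne_zero hA hC) (mul_ne_zero (by norm_num) h1))
      (mul_ne_zero (mul_ne_zero (by norm_num) hA) hC)]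
  ring


/-- with the para-Krawtchouk data, the formula
C_{n+1} = -((n+1) d_{n-1}/(d_{2n-1} d_{2n+1})) φ^{[n]}(-e_n/d_{2n}) equals
-((n+1)(n-N)(2n+1-N-γ)(2n+1-N+γ))/(4(2n-N)(2n-N+2)) for 0 ≤ n < N-1. -/
theorem stmt12 (N : ℕ) (hN : Odd N) (hN0 : 0 < N) (γ : ℂ)
    (a b e c : ℂ) (c₄ c₅ c₆ : ℂ)
    (ha : a = 1 / (1 - (N : ℂ))) (hb : b = ((N : ℂ) + γ - 1) / ((N : ℂ) - 1))
    (he : e = (1 - (N : ℂ) - γ) / 2) (hc : c = (1 - (N : ℂ) - γ) / 2)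
    (hc₄ : c₄ = 0) (hc₅ : c₅ = 2) (hc₆ : c₆ = 1)
    (dN eN : ℤ → ℂ)
    (hdN : ∀ m : ℤ, dN m = a * (m : ℂ) + 1)
    (heN : ∀ m : ℤ, eN m = b * (m : ℂ) + e)
    (φn : ℤ → ℂ → ℂ)
    (hφn : ∀ (m : ℤ) (z : ℂ), φn m z =
      a * z ^ 2 + (b + (3 / 2) * c₄ * (m : ℂ) * dN m) * z
        + (a * (c₄ * (m : ℂ) ^ 2 / 4) ^ 2 + b * (c₄ * (m : ℂ) ^ 2 / 4) + c)
        + (c₄ * (m : ℂ) / 2) * ((c₄ * (m : ℂ) ^ 2 / 4) + e)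
        - ((m : ℂ) / 4) * (16 * c₄ * c₆ - c₅ ^ 2) * dN m)
    (n : ℕ) (hn : n + 1 < N)
    (hdm1 : dN (2 * (n : ℤ) - 1) ≠ 0) (hd0 : dN (2 * (n : ℤ)) ≠ 0)
    (hdp1 : dN (2 * (n : ℤ) + 1) ≠ 0) :
    -(((n : ℂ) + 1) * dN ((n : ℤ) - 1) / (dN (2 * (n : ℤ) - 1) * dN (2 * (n : ℤ) + 1)))
        * φn (n : ℤ) (-(c₄ * (n : ℂ) ^ 2 / 4) - eN (n : ℤ) / dN (2 * (n : ℤ)))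
      = -(((n : ℂ) + 1) * ((n : ℂ) - N) * (2 * (n : ℂ) + 1 - N - γ) * (2 * (n : ℂ) + 1 - N + γ))
        / (4 * (2 * (n : ℂ) - N) * (2 * (n : ℂ) - N + 2)) := by
  have hN2 : 2 ≤ N := by omega
  have hN1 : (N : ℂ) ≠ 1 := by
    intro h
    have : (N : ℂ) = ((1 : ℕ) : ℂ) := by simpa using h
    have := Nat.cast_injective (R := ℂ) this
    omega
  have h1N : (1 : ℂ) - N ≠ 0 := by intro h; apply hN1; linear_combination -h
  simp only [hdN, heN, hφn] at *
  push_cast at *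
  have keyz : ∀ m : ℂ, a * m + 1 = (1 - (N:ℂ) + m) / (1 - N) := by
    intro m; rw [ha]; field_simp; ring
  have hA : 2 * (n:ℂ) - N ≠ 0 := by
    intro h; apply hdm1
    rw [keyz, div_eq_zero_iff]; left; linear_combination h
  have hC : 2 * (n:ℂ) - N + 2 ≠ 0 := by
    intro h; apply hdp1
    rw [keyz, div_eq_zero_iff]; left; linear_combination h
  have hB : 1 - (N:ℂ) + 2 * (n:ℂ) ≠ 0 := by
    intro h; apply hd0
    rw [keyz, div_eq_zero_iff]; left; linear_combination h
  subst ha hb he hc hc₄ hc₅ hc₆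
  have main := aux12 (N:ℂ) γ (n:ℂ)
    (-(0 * (n:ℂ) ^ 2 / 4) - (((N:ℂ) + γ - 1) / ((N:ℂ) - 1) * (n:ℂ) + (1 - (N:ℂ) - γ) / 2)
      / (1 / (1 - (N:ℂ)) * (2 * (n:ℂ)) + 1))
    h1N hA hB hC (by ring)
  linear_combination main
end
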